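/- Let n ≥ 1, let 2m > 0 be an even integer, and let t ∈ E^× with t ∈ 𝔭_E^{−m}. For k' ∈ U(W) acting on 𝕎 by k'·(v⊗w) = v⊗(k'w): (i) if k' ∈ K_{2m}^W then φ_{t,f_n}(k'^{−1}u) = φ_{t,f_n}(u) for all u ∈ 𝕎; (ii) if k' ∈ ᵗK_{2m}^W = {ᵗg : g ∈ K_{2m}^W} then φ_{t,f_{−n}}(k'^{−1}u) = φ_{t,f_{−n}}(u) for all u ∈ 𝕎. -/

import Mathlib

open Matrix MeasureTheory
open scoped Classical

noncomputable section

namespace Newforms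

variable {E : Type} [Field E]

/-- The subset `𝔭_E^m ⊆ E` for `m : ℤ`, where `𝔭_E = ϖ 𝔬_E`. -/
def Ppow (O : Subring E) (ϖ : E) (m : ℤ) : Set E :=
  {x : E | ∃ y ∈ O, x = ϖ ^ m * y}

/-- `w_k`: the antidiagonal `k × k` matrix with all antidiagonal entries `1`. -/
def wMat (E : Type) [Field E] (k : ℕ) : Matrix (Fin k) (Fin k) E :=
  fun i j => if (i : ℕ) + (j : ℕ) + 1 = k then 1 else 0

/-- `J_{2n} = [[0, wₙ],[−wₙ,0]]`. -/
def Jmat (E : Type) [Field E] (n : ℕ) : Matrix (Fin (2 * n)) (Fin (2 * n)) E :=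
  fun i j => if (i : ℕ) + (j : ℕ) + 1 = 2 * n then (if (i : ℕ) < n then (1 : E) else -1) else 0

/-- The quasi-split even unitary group `U_{2n}`, as a set of matrices:
`ᵗḡ J_{2n} g = J_{2n}`. -/
def USet (σ : E ≃+* E) (n : ℕ) : Set (Matrix (Fin (2 * n)) (Fin (2 * n)) E) :=
  {g | (g.map σ)ᵀ * Jmat E n * g = Jmat E n}

/-- The quasi-split odd unitary group `U_{2n+1}`: `ᵗh̄ w_{2n+1} h = w_{2n+1}`. -/
def UOddSet (σ : E ≃+* E) (n : ℕ) : Set (Matrix (Fin (2 * n + 1)) (Fin (2 * n + 1)) E) :=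
  {h | (h.map σ)ᵀ * wMat E (2 * n + 1) * h = wMat E (2 * n + 1)}

/-- The congruence (shape) conditions defining `K_{2m}^W` inside `U_{2n}`. -/
def KWshape (O : Subring E) (ϖ : E) (n m : ℕ) :
    Set (Matrix (Fin (2 * n)) (Fin (2 * n)) E) :=
  {g | (∀ i j, g i j ∈ O) ∧
    ∀ i j : Fin (2 * n),
      ((i : ℕ) = 0 ∧ (j : ℕ) = 0 → g i j - 1 ∈ Ppow O ϖ m) ∧
      (0 < (i : ℕ) ∧ (i : ℕ) < 2 * n - 1 ∧ (j : ℕ) = 0 → g i j ∈ Ppow O ϖ m) ∧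
      ((i : ℕ) = 2 * n - 1 ∧ (j : ℕ) = 0 → g i j ∈ Ppow O ϖ (2 * m)) ∧
      ((i : ℕ) = 2 * n - 1 ∧ 0 < (j : ℕ) ∧ (j : ℕ) < 2 * n - 1 → g i j ∈ Ppow O ϖ m) ∧
      ((i : ℕ) = 2 * n - 1 ∧ (j : ℕ) = 2 * n - 1 → g i j - 1 ∈ Ppow O ϖ m)}

/-- The compact open subgroup `K_{2m}^W ⊆ U_{2n}`. -/
def KW (σ : E ≃+* E) (O : Subring E) (ϖ : E) (n m : ℕ) :
    Set (Matrix (Fin (2 * n)) (Fin (2 * n)) E) :=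
  KWshape O ϖ n m ∩ USet σ n

/-- The congruence (shape) conditions defining `K_{2m}^V` inside `U_{2n+1}`. -/
def KVshape (O : Subring E) (ϖ : E) (n m : ℕ) :
    Set (Matrix (Fin (2 * n + 1)) (Fin (2 * n + 1)) E) :=
  {h | (∀ i j, h i j ∈ O) ∧
    (∀ i j : Fin (2 * n + 1),
      (((i : ℕ) = n ∧ (j : ℕ) ≠ n) ∨ ((i : ℕ) ≠ n ∧ (j : ℕ) = n) → h i j ∈ Ppow O ϖ m)) ∧
    (∀ i j : Fin (2 * n + 1), (i : ℕ) = n ∧ (j : ℕ) = n → h i j - 1 ∈ Ppow O ϖ (2 * m))}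

/-- The compact open subgroup `K_{2m}^V ⊆ U_{2n+1}`. -/
def KV (σ : E ≃+* E) (O : Subring E) (ϖ : E) (n m : ℕ) :
    Set (Matrix (Fin (2 * n + 1)) (Fin (2 * n + 1)) E) :=
  KVshape O ϖ n m ∩ UOddSet σ n

/-- The shape conditions for `J_{2m}^V` (central entry in `1 + 𝔭_E^m`). -/
def JVshape (O : Subring E) (ϖ : E) (n m : ℕ) :
    Set (Matrix (Fin (2 * n + 1)) (Fin (2 * n + 1)) E) :=
  {h | (∀ i j, h i j ∈ O) ∧
    (∀ i j : Fin (2 * n + 1),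
      (((i : ℕ) = n ∧ (j : ℕ) ≠ n) ∨ ((i : ℕ) ≠ n ∧ (j : ℕ) = n) → h i j ∈ Ppow O ϖ m)) ∧
    (∀ i j : Fin (2 * n + 1), (i : ℕ) = n ∧ (j : ℕ) = n → h i j - 1 ∈ Ppow O ϖ m)}

/-- `x w_k ᵗȳ = Σᵢ xᵢ σ(y_{k-1-i})` for row vectors `x, y ∈ E^k`. -/
def pairW (σ : E ≃+* E) {k : ℕ} (x y : Fin k → E) : E :=
  ∑ i, x i * σ (y i.rev)

/-- `ψ_E(x) = ψ((x + x̄)/2)`. -/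
def psiE (σ : E ≃+* E) (ψ : E → ℂ) (x : E) : ℂ := ψ ((x + σ x) / 2)

def idx0 (k : ℕ) : Fin (2 * (k + 1)) := ⟨0, by omega⟩
def idxLast (k : ℕ) : Fin (2 * (k + 1)) := ⟨2 * k + 1, by omega⟩
def bX {k : ℕ} (i : Fin k) : Fin (2 * (k + 1)) := ⟨(i : ℕ) + 1, by have := i.isLt; omega⟩
def bY {k : ℕ} (i : Fin k) : Fin (2 * (k + 1)) := ⟨(i : ℕ) + (k + 1), by have := i.isLt; omega⟩
def midIdx {k : ℕ} (i : Fin (2 * k)) : Fin (2 * (k + 1)) :=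
  ⟨(i : ℕ) + 1, by have := i.isLt; omega⟩

/-- The Heisenberg element `𝐯(x,y;z) ∈ U_{2n}` (here `n = k+1` and `x, y ∈ E^{n-1} = E^k`). -/
def vMat (σ : E ≃+* E) (k : ℕ) (x y : Fin k → E) (z : E) :
    Matrix (Fin (2 * (k + 1))) (Fin (2 * (k + 1))) E :=
  1 + (∑ i, Matrix.single (idx0 k) (bX i) (x i))
    + (∑ i, Matrix.single (idx0 k) (bY i) (y i))
    + (∑ i, Matrix.single (bX i) (idxLast k) (σ (y i.rev)))
    + (∑ i, Matrix.single (bY i) (idxLast k) (-σ (x i.rev)))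
    + Matrix.single (idx0 k) (idxLast k) (z + (pairW σ x y - pairW σ y x) / 2)

/-- The Heisenberg group `H_{n-1} = {𝐯(x,y;z) | x, y ∈ E^{n-1}, z ∈ F}` (with `n = k+1`). -/
def Hset (σ : E ≃+* E) (k : ℕ) : Set (Matrix (Fin (2 * (k + 1))) (Fin (2 * (k + 1))) E) :=
  {g | ∃ x y : Fin k → E, ∃ z : E, σ z = z ∧ g = vMat σ k x y z}

/-- The embedding `U_{2n-2} → U_{2n}, g' ↦ diag(1, g', 1)` (here `n = k+1`). -/
def iotaU (k : ℕ) (g : Matrix (Fin (2 * k)) (Fin (2 * k)) E) :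
    Matrix (Fin (2 * (k + 1))) (Fin (2 * (k + 1))) E :=
  Matrix.single (idx0 k) (idx0 k) 1
    + Matrix.single (idxLast k) (idxLast k) 1
    + ∑ i, ∑ j, Matrix.single (midIdx i) (midIdx j) (g i j)

/-- `d_t = diag(t, 1_{2n-2}, t̄⁻¹)`. -/
def dtW (σ : E ≃+* E) (n : ℕ) (t : E) : Matrix (Fin (2 * n)) (Fin (2 * n)) E :=
  Matrix.diagonal fun i =>
    if (i : ℕ) = 0 then t else if (i : ℕ) = 2 * n - 1 then (σ t)⁻¹ else 1

/-- `diag(ϖ^{-m}, 1_{2n-2}, ϖ^m)`. -/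
def dWmat (ϖ : E) (n : ℕ) (m : ℤ) : Matrix (Fin (2 * n)) (Fin (2 * n)) E :=
  Matrix.diagonal fun i =>
    if (i : ℕ) = 0 then ϖ ^ (-m) else if (i : ℕ) = 2 * n - 1 then ϖ ^ m else 1

/-- `diag(ϖ^{-m}·1_n, 1, ϖ^m·1_n)`. -/
def dVmat (ϖ : E) (n : ℕ) (m : ℤ) : Matrix (Fin (2 * n + 1)) (Fin (2 * n + 1)) E :=
  Matrix.diagonal fun i =>
    if (i : ℕ) < n then ϖ ^ (-m) else if (i : ℕ) = n then 1 else ϖ ^ m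

/-- The span of `{π(𝐯(0,0;z)) v − χ(z) v}`: the kernel of `π ↠ π_χ`. -/
def FJkernel (σ : E ≃+* E) (k : ℕ) {V : Type} [AddCommGroup V] [Module ℂ V]
    (π : Matrix (Fin (2 * (k + 1))) (Fin (2 * (k + 1))) E → (V →ₗ[ℂ] V)) (χ : E → ℂ) :
    Submodule ℂ V :=
  Submodule.span ℂ {w | ∃ z : E, σ z = z ∧ ∃ v : V, w = π (vMat σ k 0 0 z) v - χ z • v}

/-- The submodule `π^K` of `K`-fixed vectors. -/
def fixedSub {V : Type} [AddCommGroup V] [Module ℂ V] {α : Type}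
    (π : α → (V →ₗ[ℂ] V)) (K : Set α) : Submodule ℂ V where
  carrier := {v | ∀ g ∈ K, π g v = v}
  add_mem' := by
    intro a b ha hb g hg
    rw [map_add, ha g hg, hb g hg]
  zero_mem' := by
    intro g hg
    exact map_zero _
  smul_mem' := by
    intro c v hv g hg
    rw [_root_.map_smul, hv g hg]

/-- The skew-hermitian form on `W = E^{2n}` in the basis `f_n, …, f_1, f_{-1}, …, f_{-n}`. -/
def formW (σ : E ≃+* E) (n : ℕ) (u v : Fin (2 * n) → E) : E :=
  ∑ i : Fin (2 * n), σ (u i) * v i.rev * (if (i : ℕ) < n then 1 else -1)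

/-- The lattice `(⊕_{i≠0} 𝔬_E e_i) ⊕ 𝔭_E^m e_0` in `V = E^{2n+1}` (coordinate `n` is `e_0`). -/
def MVlat (O : Subring E) (ϖ : E) (n : ℕ) (m : ℤ) : Set (Fin (2 * n + 1) → E) :=
  {u | (∀ i : Fin (2 * n + 1), (i : ℕ) ≠ n → u i ∈ O) ∧
       ∀ i : Fin (2 * n + 1), (i : ℕ) = n → u i ∈ Ppow O ϖ m}

/-- The lattice `(⊕_{i≠-n} 𝔬_E f_i) ⊕ 𝔭_E^m f_{-n}` in `W = E^{2n}`
(coordinate `2n-1` is `f_{-n}`). -/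
def NWlat (O : Subring E) (ϖ : E) (n : ℕ) (m : ℤ) : Set (Fin (2 * n) → E) :=
  {u | (∀ i : Fin (2 * n), (i : ℕ) ≠ 2 * n - 1 → u i ∈ O) ∧
       ∀ i : Fin (2 * n), (i : ℕ) = 2 * n - 1 → u i ∈ Ppow O ϖ m}

/-- The lattice `𝔭_E^m f_n ⊕ (⊕_{i≠n} 𝔬_E f_i)` in `W = E^{2n}` (coordinate `0` is `f_n`). -/
def NWdual (O : Subring E) (ϖ : E) (n : ℕ) (m : ℤ) : Set (Fin (2 * n) → E) :=
  {u | (∀ i : Fin (2 * n), (i : ℕ) ≠ 0 → u i ∈ O) ∧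
       ∀ i : Fin (2 * n), (i : ℕ) = 0 → u i ∈ Ppow O ϖ m}

/-- `𝕎 = V ⊗_E W` realized as `(2n+1) × 2n` matrices via the bases `(e_i)` and `(f_j)`;
this is `⟨T, T'⟩_V ⊗ ⟨,⟩_W`-pairing before taking the trace to `F`. -/
def formVW (σ : E ≃+* E) (n : ℕ) (T T' : Matrix (Fin (2 * n + 1)) (Fin (2 * n)) E) : E :=
  ∑ i, ∑ j, σ (T i j) * T' i.rev j.rev * (if (j : ℕ) < n then 1 else -1)

/-- The symplectic `F`-bilinear form `⟨v⊗w, v'⊗w'⟩ = tr_{E/F}(⟨v,v'⟩_V ⟨w,w'⟩_W)` on `𝕎`. -/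
def sympForm (σ : E ≃+* E) (n : ℕ) (T T' : Matrix (Fin (2 * n + 1)) (Fin (2 * n)) E) : E :=
  formVW σ n T T' + σ (formVW σ n T T')

/-- The self-dual lattice `A = Γ_V ⊗ Γ_W ⊆ 𝕎`. -/
def ASet (O : Subring E) (n : ℕ) : Set (Matrix (Fin (2 * n + 1)) (Fin (2 * n)) E) :=
  {T | ∀ i j, T i j ∈ O}

/-- The Weyl-type element `w_{1,n-1} ∈ U_{2n}` (here `n = k+1`). -/
def w1Mat (E : Type) [Field E] (k : ℕ) : Matrix (Fin (2 * (k + 1))) (Fin (2 * (k + 1))) E :=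
  (∑ i : Fin k, Matrix.single (⟨(i : ℕ), by have := i.isLt; omega⟩ : Fin (2 * (k + 1)))
      ⟨(i : ℕ) + 1, by have := i.isLt; omega⟩ 1)
  + Matrix.single (⟨k, by omega⟩ : Fin (2 * (k + 1))) ⟨0, by omega⟩ 1
  + Matrix.single (⟨k + 1, by omega⟩ : Fin (2 * (k + 1))) ⟨2 * k + 1, by omega⟩ 1
  + (∑ i : Fin k, Matrix.single
      (⟨k + 2 + (i : ℕ), by have := i.isLt; omega⟩ : Fin (2 * (k + 1)))
      ⟨k + 1 + (i : ℕ), by have := i.isLt; omega⟩ 1)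

/-- `𝐦(a) = diag(1, a, w_{n-1} ᵗā⁻¹ w_{n-1}⁻¹, 1) ∈ U_{2n}` (here `n = k+1`). -/
def mMatBig (σ : E ≃+* E) (k : ℕ) (a : Matrix (Fin k) (Fin k) E) :
    Matrix (Fin (2 * (k + 1))) (Fin (2 * (k + 1))) E :=
  Matrix.single (idx0 k) (idx0 k) 1
    + Matrix.single (idxLast k) (idxLast k) 1
    + (∑ i, ∑ j, Matrix.single (bX i) (bX j) (a i j))
    + (∑ i, ∑ j, Matrix.single (bY i) (bY j)
        ((wMat E k * ((a⁻¹).map σ)ᵀ * (wMat E k)⁻¹) i j))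

/-- The unipotent element `g_u` with `ᵗu` in block position `(1,2)` and `−ū w_{n-1}` in block
position `(3,4)` (block sizes `(n-1,1,1,n-1)`, `n = k+1`). -/
def gUMat (σ : E ≃+* E) (k : ℕ) (u : Fin k → E) :
    Matrix (Fin (2 * (k + 1))) (Fin (2 * (k + 1))) E :=
  1 + (∑ i : Fin k, Matrix.single
        (⟨(i : ℕ), by have := i.isLt; omega⟩ : Fin (2 * (k + 1))) ⟨k, by omega⟩ (u i))
    + (∑ j : Fin k, Matrix.single (⟨k + 1, by omega⟩ : Fin (2 * (k + 1)))
        ⟨k + 2 + (j : ℕ), by have := j.isLt; omega⟩ (-σ (u j.rev)))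

/-- The pure tensor `e_0 ⊗ w ∈ 𝕎` in matrix coordinates. -/
def e0tensor {E : Type} [Field E] (n : ℕ) (w : Fin (2 * n) → E) :
    Matrix (Fin (2 * n + 1)) (Fin (2 * n)) E :=
  fun i j => if (i : ℕ) = n then w j else 0

/-- The lattice-model function `φ_{t,w}`, supported on `A + t e_0 ⊗ w` with
`φ_{t,w}(a + t e_0 ⊗ w) = ψ(−½⟨a, t e_0 ⊗ w⟩)`. -/
def phiTW (σ : E ≃+* E) (O : Subring E) (ψ : E → ℂ) (n : ℕ) (t : E) (w : Fin (2 * n) → E)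
    (u : Matrix (Fin (2 * n + 1)) (Fin (2 * n)) E) : ℂ :=
  if (∀ i j, (u - t • e0tensor n w) i j ∈ O) then
    ψ (-sympForm σ n (u - t • e0tensor n w) (t • e0tensor n w) / 2)
  else 0

/-- `K_0^W = U_{2n} ∩ GL_{2n}(𝔬_E)`. -/
def K0Set (σ : E ≃+* E) (O : Subring E) (n : ℕ) :
    Set (Matrix (Fin (2 * n)) (Fin (2 * n)) E) :=
  {g | g ∈ USet σ n ∧ ∀ i j, g i j ∈ O}

/-- `Y ⊆ E^{2n}`: the span of the first `n` coordinates. -/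
def YSet (E : Type) [Field E] (n : ℕ) : Set (Fin (2 * n) → E) :=
  {v | ∀ i : Fin (2 * n), n ≤ (i : ℕ) → v i = 0}

/-- The Siegel parabolic `Q_{2n} = {g ∈ U_{2n} : g Y = Y}`. -/
def QSet (σ : E ≃+* E) (n : ℕ) : Set (Matrix (Fin (2 * n)) (Fin (2 * n)) E) :=
  {g | g ∈ USet σ n ∧ (fun v => g.mulVec v) '' YSet E n = YSet E n}

/-- `K_S`: elements of `K_0^W` whose lower-left `n × n` block has entries in `𝔭_E`. -/
def KSSet (σ : E ≃+* E) (O : Subring E) (ϖ : E) (n : ℕ) :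
    Set (Matrix (Fin (2 * n)) (Fin (2 * n)) E) :=
  {g | g ∈ K0Set σ O n ∧
    ∀ i j : Fin (2 * n), n ≤ (i : ℕ) → (j : ℕ) < n → g i j ∈ Ppow O ϖ 1}

/-- `K_M`: elements of `K_0^W` with blocks `(2,1)`, `(3,1)`, `(3,2)` (block sizes
`(1, 2n-2, 1)`) having entries in `𝔭_E`. -/
def KMSet (σ : E ≃+* E) (O : Subring E) (ϖ : E) (n : ℕ) :
    Set (Matrix (Fin (2 * n)) (Fin (2 * n)) E) :=
  {g | g ∈ K0Set σ O n ∧ ∀ i j : Fin (2 * n),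
      ((0 < (i : ℕ) ∧ (j : ℕ) = 0) ∨ ((i : ℕ) = 2 * n - 1 ∧ (j : ℕ) < 2 * n - 1)) →
      g i j ∈ Ppow O ϖ 1}

/-- The Schwartz space `𝒮(E^k)` of locally constant compactly supported functions, as a
`ℂ`-submodule of all functions. -/
def SMod (E : Type) [Field E] [TopologicalSpace E] (k : ℕ) :
    Submodule ℂ ((Fin k → E) → ℂ) where
  carrier := {f | (∀ ξ, ∃ U ∈ nhds ξ, ∀ η ∈ U, f η = f ξ) ∧
                  ∃ C : Set (Fin k → E), IsCompact C ∧ ∀ ξ ∉ C, f ξ = 0}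
  add_mem' := by
    rintro f g ⟨hf1, Cf, hCf, hf2⟩ ⟨hg1, Cg, hCg, hg2⟩
    refine ⟨fun ξ => ?_, Cf ∪ Cg, hCf.union hCg, fun ξ hξ => ?_⟩
    · obtain ⟨U, hU, hUf⟩ := hf1 ξ
      obtain ⟨Vv, hV, hVg⟩ := hg1 ξ
      exact ⟨U ∩ Vv, Filter.inter_mem hU hV, fun η hη => by
        simp only [Pi.add_apply, hUf η hη.1, hVg η hη.2]⟩
    · simp only [Pi.add_apply, hf2 ξ (fun h => hξ (Set.mem_union_left _ h)),
        hg2 ξ (fun h => hξ (Set.mem_union_right _ h)), add_zero]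
  zero_mem' := by
    refine ⟨fun ξ => ⟨Set.univ, Filter.univ_mem, fun η _ => rfl⟩,
      ∅, isCompact_empty, fun ξ _ => rfl⟩
  smul_mem' := by
    rintro c f ⟨hf1, Cf, hCf, hf2⟩
    refine ⟨fun ξ => ?_, Cf, hCf, fun ξ hξ => ?_⟩
    · obtain ⟨U, hU, hUf⟩ := hf1 ξ
      exact ⟨U, hU, fun η hη => by simp only [Pi.smul_apply, hUf η hη]⟩
    · simp only [Pi.smul_apply, hf2 ξ hξ, smul_zero]

end Newforms

namespace Newforms

section Helpers

variable {E : Type} [Field E]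

lemma Ppow_mul_mem {O : Subring E} {ϖ : E} {m : ℤ} {c x : E} (hc : c ∈ O)
    (hx : x ∈ Ppow O ϖ m) : c * x ∈ Ppow O ϖ m := by
  obtain ⟨y, hy, rfl⟩ := hx
  exact ⟨c * y, O.mul_mem hc hy, by ring⟩

lemma Ppow_zero_mem {O : Subring E} {ϖ : E} {m : ℤ} : (0 : E) ∈ Ppow O ϖ m :=
  ⟨0, O.zero_mem, by ring⟩

lemma Ppow_add_mem {O : Subring E} {ϖ : E} {m : ℤ} {x y : E}
    (hx : x ∈ Ppow O ϖ m) (hy : y ∈ Ppow O ϖ m) : x + y ∈ Ppow O ϖ m := by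
  obtain ⟨a, ha, rfl⟩ := hx; obtain ⟨b, hb, rfl⟩ := hy
  exact ⟨a + b, O.add_mem ha hb, by ring⟩

lemma Ppow_sum_mem {O : Subring E} {ϖ : E} {m : ℤ} {ι : Type*} (s : Finset ι)
    (f : ι → E) (h : ∀ i ∈ s, f i ∈ Ppow O ϖ m) : ∑ i ∈ s, f i ∈ Ppow O ϖ m :=
  Finset.sum_induction f _ (fun _ _ => Ppow_add_mem) Ppow_zero_mem h

lemma Ppow_sigma {O : Subring E} {ϖ : E} {m : ℤ} (σ : E ≃+* E)
    (hσO : ∀ x ∈ O, σ x ∈ O) (hϖF : σ ϖ = ϖ) {x : E}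
    (hx : x ∈ Ppow O ϖ m) : σ x ∈ Ppow O ϖ m := by
  obtain ⟨y, hy, rfl⟩ := hx
  exact ⟨σ y, hσO y hy, by rw [_root_.map_mul, map_zpow₀, hϖF]⟩

lemma Ppow_mono {O : Subring E} {ϖ : E} (hϖO : ϖ ∈ O) (hϖ0 : ϖ ≠ 0) {a b : ℤ}
    (hab : b ≤ a) {x : E} (hx : x ∈ Ppow O ϖ a) : x ∈ Ppow O ϖ b := by
  obtain ⟨y, hy, rfl⟩ := hx
  refine ⟨ϖ ^ (a - b).toNat * y, O.mul_mem (O.pow_mem hϖO _) hy, ?_⟩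
  have h1 : ϖ ^ a = ϖ ^ b * ϖ ^ (a - b) := by
    rw [← zpow_add₀ hϖ0]; congr 1; ring
  have h2 : ϖ ^ (a - b) = ϖ ^ ((a - b).toNat) := by
    rw [← zpow_natCast ϖ, Int.toNat_of_nonneg (by omega)]
  rw [h1, h2]; ring

lemma t_mul_Ppow {O : Subring E} {ϖ t x : E} (hϖ0 : ϖ ≠ 0) {m : ℤ}
    (ht : t ∈ Ppow O ϖ (-m)) (hx : x ∈ Ppow O ϖ m) : t * x ∈ O := by
  obtain ⟨c, hc, rfl⟩ := ht; obtain ⟨y, hy, rfl⟩ := hx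
  have h1 : ϖ ^ (-m) * ϖ ^ m = 1 := by
    rw [← zpow_add₀ hϖ0]; simp
  have he : ϖ ^ (-m) * c * (ϖ ^ m * y) = c * y := by
    rw [show ϖ ^ (-m) * c * (ϖ ^ m * y) = ϖ ^ (-m) * ϖ ^ m * (c * y) by ring, h1, one_mul]
  rw [he]; exact O.mul_mem hc hy

lemma tt_mul_Ppow {O : Subring E} {ϖ t s x : E} (hϖ0 : ϖ ≠ 0) {m : ℤ}
    (ht : t ∈ Ppow O ϖ (-m)) (hs : s ∈ Ppow O ϖ (-m)) (hx : x ∈ Ppow O ϖ (2 * m)) :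
    t * s * x ∈ O := by
  obtain ⟨c, hc, rfl⟩ := ht; obtain ⟨d, hd, rfl⟩ := hs; obtain ⟨y, hy, rfl⟩ := hx
  have h1 : ϖ ^ (-m) * ϖ ^ (-m) * ϖ ^ (2 * m) = 1 := by
    rw [← zpow_add₀ hϖ0, ← zpow_add₀ hϖ0, show -m + -m + 2 * m = 0 by ring, zpow_zero]
  have he : ϖ ^ (-m) * c * (ϖ ^ (-m) * d) * (ϖ ^ (2 * m) * y) = c * d * y := by
    rw [show ϖ ^ (-m) * c * (ϖ ^ (-m) * d) * (ϖ ^ (2 * m) * y)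
        = ϖ ^ (-m) * ϖ ^ (-m) * ϖ ^ (2 * m) * (c * d * y) by ring, h1, one_mul]
  rw [he]; exact O.mul_mem (O.mul_mem hc hd) hy

/-- The sign `±1` attached to an index of `Fin (2n)`. -/
def sgnE (E : Type) [Field E] (n : ℕ) (i : Fin (2 * n)) : E :=
  if (i : ℕ) < n then 1 else -1

lemma sgnE_mem {O : Subring E} {n : ℕ} (i : Fin (2 * n)) : sgnE E n i ∈ O := by
  unfold sgnE; split
  · exact O.one_mem
  · exact O.neg_mem O.one_mem

lemma sgnE_rev {n : ℕ} (i : Fin (2 * n)) : sgnE E n i.rev = - sgnE E n i := by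
  have hi := i.isLt
  unfold sgnE
  rw [Fin.val_rev]
  split_ifs with h1 h2 h3 <;> first | (exfalso; omega) | ring

lemma sgnE_mul_self {n : ℕ} (i : Fin (2 * n)) : sgnE E n i * sgnE E n i = 1 := by
  unfold sgnE; split <;> norm_num

lemma Jmat_apply {n : ℕ} (i j : Fin (2 * n)) :
    Jmat E n i j = if j = i.rev then sgnE E n i else 0 := by
  have hi := i.isLt; have hj := j.isLt
  have hrev : j = i.rev ↔ (i : ℕ) + (j : ℕ) + 1 = 2 * n := by
    rw [Fin.ext_iff, Fin.val_rev]; omega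
  unfold Jmat sgnE
  by_cases h : (i : ℕ) + (j : ℕ) + 1 = 2 * n
  · rw [if_pos h, if_pos (hrev.mpr h)]
  · rw [if_neg h, if_neg (fun hc => h (hrev.mp hc))]

lemma JJ (n : ℕ) : Jmat E n * Jmat E n = (-1 : Matrix (Fin (2 * n)) (Fin (2 * n)) E) := by
  ext i k
  rw [Matrix.mul_apply]
  rw [Finset.sum_eq_single i.rev]
  · rw [Jmat_apply, if_pos rfl, Jmat_apply, Fin.rev_rev]
    by_cases h : k = i
    · subst h
      rw [if_pos rfl, sgnE_rev, mul_neg, sgnE_mul_self]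
      simp [Matrix.neg_apply, Matrix.one_apply]
    · rw [if_neg h, mul_zero]
      simp [Matrix.neg_apply, Matrix.one_apply, Ne.symm h]
  · intro b _ hb
    rw [Jmat_apply, if_neg hb]
    exact zero_mul _
  · intro hmem; exact absurd (Finset.mem_univ _) hmem

/-- Explicit inverse of a unitary matrix: `h i j = s_i s_j σ(g_{rev j, rev i})`. -/
def ginvM (σ : E ≃+* E) (n : ℕ) (g : Matrix (Fin (2 * n)) (Fin (2 * n)) E) :
    Matrix (Fin (2 * n)) (Fin (2 * n)) E :=
  fun i j => sgnE E n i * sgnE E n j * σ (g j.rev i.rev)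

lemma ginvM_eq (σ : E ≃+* E) (n : ℕ) (g : Matrix (Fin (2 * n)) (Fin (2 * n)) E) :
    ginvM σ n g = -(Jmat E n) * (g.map σ)ᵀ * Jmat E n := by
  ext i j
  rw [Matrix.mul_apply, Finset.sum_eq_single j.rev]
  · rw [Jmat_apply, Fin.rev_rev, if_pos rfl]
    rw [Matrix.mul_apply, Finset.sum_eq_single i.rev]
    · rw [Matrix.neg_apply, Jmat_apply, if_pos rfl, Matrix.transpose_apply,
        Matrix.map_apply, sgnE_rev]
      show sgnE E n i * sgnE E n j * σ (g j.rev i.rev) = _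
      ring
    · intro b _ hb
      rw [Matrix.neg_apply, Jmat_apply, if_neg hb, neg_zero, zero_mul]
    · intro hmem; exact absurd (Finset.mem_univ _) hmem
  · intro b _ hb
    rw [Jmat_apply, if_neg (by
      intro hc; exact hb (by rw [hc, Fin.rev_rev]))]
    · exact mul_zero _
  · intro hmem; exact absurd (Finset.mem_univ _) hmem

lemma ginvM_mul (σ : E ≃+* E) (n : ℕ) (g : Matrix (Fin (2 * n)) (Fin (2 * n)) E)
    (hg : g ∈ USet σ n) : ginvM σ n g * g = 1 := by
  have hU : (g.map σ)ᵀ * (Jmat E n * g) = Jmat E n := by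
    rw [← Matrix.mul_assoc]; exact hg
  rw [ginvM_eq]
  simp only [Matrix.neg_mul, Matrix.mul_assoc, hU]
  rw [JJ]
  simp

end Helpers

end Newforms

namespace Newforms

section Core

variable {E : Type} [Field E]

lemma rev_ne_self {n : ℕ} (j0 : Fin (2 * n)) : j0.rev ≠ j0 := by
  intro hc
  have hv := congrArg Fin.val hc
  have := j0.isLt
  rw [Fin.val_rev] at hv
  omega

lemma formVW_e0 (σ : E ≃+* E) (n : ℕ) (hn : 1 ≤ n) (t : E) (j0 : Fin (2 * n))
    (nI : Fin (2 * n + 1)) (hvnI : (nI : ℕ) = n)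
    (T : Matrix (Fin (2 * n + 1)) (Fin (2 * n)) E) :
    formVW σ n T (t • e0tensor n (fun j => if j = j0 then (1 : E) else 0)) =
      σ (T nI j0.rev) * t * sgnE E n j0.rev := by
  have hrevnI : ((nI.rev : Fin (2 * n + 1)) : ℕ) = n := by
    rw [Fin.val_rev, hvnI]; omega
  unfold formVW sgnE
  rw [Finset.sum_eq_single nI]
  · rw [Finset.sum_eq_single j0.rev]
    · simp only [Matrix.smul_apply, e0tensor, hrevnI, if_true, Fin.rev_rev,
        smul_eq_mul]
      ring
    · intro b _ hb
      have hb' : b.rev ≠ j0 := fun hc => hb (by rw [← hc, Fin.rev_rev])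
      simp [e0tensor, hrevnI, hb']
    · intro hmem; exact absurd (Finset.mem_univ _) hmem
  · intro b _ hb
    have hb' : ((b.rev : Fin (2 * n + 1)) : ℕ) ≠ n := by
      rw [Fin.val_rev]
      intro hc
      apply hb
      rw [Fin.ext_iff, hvnI]
      have := b.isLt
      omega
    refine Finset.sum_eq_zero fun j _ => ?_
    simp only [Matrix.smul_apply, e0tensor, smul_eq_mul]
    rw [if_neg hb', mul_zero, mul_zero, zero_mul]
  · intro hmem; exact absurd (Finset.mem_univ _) hmem

lemma mulT_sub {n : ℕ} (u X : Matrix (Fin (2 * n + 1)) (Fin (2 * n)) E)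
    (h : Matrix (Fin (2 * n)) (Fin (2 * n)) E) :
    u * hᵀ - X = (u - X) * hᵀ + (X * hᵀ - X) := by
  rw [Matrix.sub_mul]; abel

lemma Dapply {n : ℕ} (t : E) (j0 : Fin (2 * n))
    (h : Matrix (Fin (2 * n)) (Fin (2 * n)) E) (i : Fin (2 * n + 1)) (j : Fin (2 * n)) :
    ((t • e0tensor n (fun l => if l = j0 then (1 : E) else 0)) * hᵀ
      - t • e0tensor n (fun l => if l = j0 then (1 : E) else 0)) i j
    = if (i : ℕ) = n then t * (h j j0 - if j = j0 then 1 else 0) else 0 := by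
  rw [Matrix.sub_apply, Matrix.mul_apply]
  simp only [Matrix.smul_apply, e0tensor, Matrix.transpose_apply, smul_eq_mul]
  by_cases hi : (i : ℕ) = n
  · simp only [if_pos hi, mul_ite, mul_one, mul_zero, ite_mul, zero_mul,
      Finset.sum_ite_eq', Finset.mem_univ, if_true]
    split_ifs <;> ring
  · simp only [if_neg hi, mul_zero, zero_mul, Finset.sum_const_zero, sub_zero]

lemma supp_fwd {O : Subring E} {ϖ : E} (hϖ0 : ϖ ≠ 0) {n m : ℕ} {t : E}
    (ht : t ∈ Ppow O ϖ (-(m : ℤ))) (j0 : Fin (2 * n))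
    (h : Matrix (Fin (2 * n)) (Fin (2 * n)) E)
    (hO : ∀ i j, h i j ∈ O)
    (hcol : ∀ j, h j j0 - (if j = j0 then 1 else 0) ∈ Ppow O ϖ (m : ℤ))
    (u : Matrix (Fin (2 * n + 1)) (Fin (2 * n)) E)
    (hu : ∀ i j, (u - t • e0tensor n (fun l => if l = j0 then (1 : E) else 0)) i j ∈ O) :
    ∀ i j, (u * hᵀ - t • e0tensor n (fun l => if l = j0 then (1 : E) else 0)) i j ∈ O := by
  intro i j
  rw [mulT_sub u _ h, Matrix.add_apply, Dapply]
  refine O.add_mem ?_ ?_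
  · rw [Matrix.mul_apply]
    exact Subring.sum_mem O fun l _ => O.mul_mem (hu i l) (hO j l)
  · split
    · exact t_mul_Ppow hϖ0 ht (hcol j)
    · exact O.zero_mem

lemma key_inv (σ : E ≃+* E) (hσinv : ∀ x, σ (σ x) = x)
    (O : Subring E) (hσO : ∀ x ∈ O, σ x ∈ O)
    (ϖ : E) (hϖ0 : ϖ ≠ 0) (hϖF : σ ϖ = ϖ) (hodd : (2 : E)⁻¹ ∈ O)
    (ψ : E → ℂ) (hψadd : ∀ x y : E, σ x = x → σ y = y → ψ (x + y) = ψ x * ψ y)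
    (hψO : ∀ x : E, σ x = x → x ∈ O → ψ x = 1)
    (n m : ℕ) (hn : 1 ≤ n) (t : E) (ht : t ∈ Ppow O ϖ (-(m : ℤ)))
    (j0 : Fin (2 * n)) (h k : Matrix (Fin (2 * n)) (Fin (2 * n)) E)
    (hO : ∀ i j, h i j ∈ O) (kO : ∀ i j, k i j ∈ O)
    (hcol : ∀ j, h j j0 - (if j = j0 then 1 else 0) ∈ Ppow O ϖ (m : ℤ))
    (kcol : ∀ j, k j j0 - (if j = j0 then 1 else 0) ∈ Ppow O ϖ (m : ℤ))
    (hrow : ∀ l, h j0.rev l - (if l = j0.rev then 1 else 0) ∈ Ppow O ϖ (m : ℤ))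
    (hcorner : h j0.rev j0 ∈ Ppow O ϖ (2 * (m : ℤ)))
    (hkh : k * h = 1)
    (w : Fin (2 * n) → E) (hw : w = fun j => if j = j0 then 1 else 0) :
    ∀ u, phiTW σ O ψ n t w (u * hᵀ) = phiTW σ O ψ n t w u := by
  subst hw
  intro u
  set X := t • e0tensor n (fun j => if j = j0 then (1 : E) else 0) with hX
  by_cases hu : ∀ i j, (u - X) i j ∈ O
  · have hu' : ∀ i j, (u * hᵀ - X) i j ∈ O := supp_fwd hϖ0 ht j0 h hO hcol u hu
    unfold phiTW
    rw [if_pos hu', if_pos hu]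
    -- phase computation
    set nI : Fin (2 * n + 1) := ⟨n, by omega⟩ with hnIdef
    have hnI : (nI : ℕ) = n := rfl
    have hjne : j0.rev ≠ j0 := rev_ne_self j0
    have hentry : (u * hᵀ - X) nI j0.rev
        = (∑ l, (u - X) nI l * h j0.rev l) + t * h j0.rev j0 := by
      rw [mulT_sub u X h, Matrix.add_apply, Dapply, if_pos hnI, if_neg hjne, sub_zero,
        Matrix.mul_apply]
      simp only [Matrix.transpose_apply]
    have hsum : ∑ l, (u - X) nI l * (h j0.rev l - if l = j0.rev then 1 else 0)
        = (∑ l, (u - X) nI l * h j0.rev l) - (u - X) nI j0.rev := by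
      simp only [mul_sub, Finset.sum_sub_distrib, mul_ite, mul_one, mul_zero,
        Finset.sum_ite_eq', Finset.mem_univ, if_true]
    have hdiff : (u * hᵀ - X) nI j0.rev - (u - X) nI j0.rev
        = (∑ l, (u - X) nI l * (h j0.rev l - if l = j0.rev then 1 else 0))
          + t * h j0.rev j0 := by
      rw [hentry, hsum]; ring
    have hmemS : (∑ l, (u - X) nI l * (h j0.rev l - if l = j0.rev then 1 else 0))
        ∈ Ppow O ϖ (m : ℤ) :=
      Ppow_sum_mem _ _ (fun l _ => Ppow_mul_mem (hu nI l) (hrow l))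
    set F1 := formVW σ n (u * hᵀ - X) X with hF1def
    set F0 := formVW σ n (u - X) X with hF0def
    have hF1 : F1 = σ ((u * hᵀ - X) nI j0.rev) * t * sgnE E n j0.rev :=
      formVW_e0 σ n hn t j0 nI rfl _
    have hF0 : F0 = σ ((u - X) nI j0.rev) * t * sgnE E n j0.rev :=
      formVW_e0 σ n hn t j0 nI rfl _
    have hFdiff : F1 - F0
        = (t * σ (∑ l, (u - X) nI l * (h j0.rev l - if l = j0.rev then 1 else 0))
            + t * σ t * σ (h j0.rev j0)) * sgnE E n j0.rev := by
      rw [hF1, hF0, ← sub_mul, ← sub_mul, ← map_sub, hdiff, map_add, _root_.map_mul]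
      ring
    have hmemF : F1 - F0 ∈ O := by
      rw [hFdiff]
      refine O.mul_mem (O.add_mem ?_ ?_) (sgnE_mem _)
      · exact t_mul_Ppow hϖ0 ht (Ppow_sigma σ hσO hϖF hmemS)
      · exact tt_mul_Ppow hϖ0 ht (Ppow_sigma σ hσO hϖF ht) (Ppow_sigma σ hσO hϖF hcorner)
    have hσ2 : σ (2 : E) = 2 := by
      have : ((2 : ℕ) : E) = (2 : E) := by norm_num
      rw [← this, map_natCast, this]
    have fix : ∀ z : E, σ (-(z + σ z) / 2) = -(z + σ z) / 2 := by
      intro z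
      rw [map_div₀, map_neg, map_add, hσinv, hσ2, add_comm]
    show ψ (-sympForm σ n (u * hᵀ - X) X / 2) = ψ (-sympForm σ n (u - X) X / 2)
    have hs1 : sympForm σ n (u * hᵀ - X) X = F1 + σ F1 := rfl
    have hs0 : sympForm σ n (u - X) X = F0 + σ F0 := rfl
    rw [hs1, hs0]
    have hsplit : -(F1 + σ F1) / 2
        = -(F0 + σ F0) / 2 + -((F1 - F0) + σ (F1 - F0)) / 2 := by
      rw [map_sub]; ring
    rw [hsplit, hψadd _ _ (fix F0) (fix (F1 - F0)), hψO _ (fix (F1 - F0)) ?_, mul_one]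
    have heq : -((F1 - F0) + σ (F1 - F0)) / 2
        = -(((F1 - F0) + σ (F1 - F0)) * 2⁻¹) := by
      rw [div_eq_mul_inv]; ring
    rw [heq]
    exact O.neg_mem (O.mul_mem (O.add_mem hmemF (hσO _ hmemF)) hodd)
  · have hu' : ¬ ∀ i j, (u * hᵀ - X) i j ∈ O := by
      intro hc
      apply hu
      have h2 := supp_fwd hϖ0 ht j0 k kO kcol (u * hᵀ) hc
      rwa [Matrix.mul_assoc, ← Matrix.transpose_mul, hkh, Matrix.transpose_one,
        Matrix.mul_one] at h2
    unfold phiTW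
    rw [if_neg hu', if_neg hu]

end Core

end Newforms

namespace Newforms

section Shape

variable {E : Type} [Field E]

lemma ginvM_mem_shape (σ : E ≃+* E) (O : Subring E) (hσO : ∀ x ∈ O, σ x ∈ O)
    (ϖ : E) (hϖF : σ ϖ = ϖ) (n m : ℕ) (hn : 1 ≤ n)
    (g : Matrix (Fin (2 * n)) (Fin (2 * n)) E) (hg : g ∈ KWshape O ϖ n m) :
    ginvM σ n g ∈ KWshape O ϖ n m := by
  obtain ⟨hO, hsh⟩ := hg
  constructor
  · intro i j
    exact O.mul_mem (O.mul_mem (sgnE_mem _) (sgnE_mem _)) (hσO _ (hO _ _))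
  · intro i j
    have hi := i.isLt; have hj := j.isLt
    have hir : (i.rev : ℕ) = 2 * n - 1 - (i : ℕ) := by rw [Fin.val_rev]; omega
    have hjr : (j.rev : ℕ) = 2 * n - 1 - (j : ℕ) := by rw [Fin.val_rev]; omega
    refine ⟨?_, ?_, ?_, ?_, ?_⟩
    · rintro ⟨h1, h2⟩
      have hs1 : sgnE E n i = 1 := by unfold sgnE; rw [if_pos (by omega)]
      have hs2 : sgnE E n j = 1 := by unfold sgnE; rw [if_pos (by omega)]
      show sgnE E n i * sgnE E n j * σ (g j.rev i.rev) - 1 ∈ _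
      rw [hs1, hs2, one_mul, one_mul, ← map_one σ, ← map_sub]
      exact Ppow_sigma σ hσO hϖF (((hsh j.rev i.rev).2.2.2.2) ⟨by omega, by omega⟩)
    · rintro ⟨h1, h2, h3⟩
      exact Ppow_mul_mem (O.mul_mem (sgnE_mem _) (sgnE_mem _))
        (Ppow_sigma σ hσO hϖF (((hsh j.rev i.rev).2.2.2.1) ⟨by omega, by omega, by omega⟩))
    · rintro ⟨h1, h2⟩
      exact Ppow_mul_mem (O.mul_mem (sgnE_mem _) (sgnE_mem _))
        (Ppow_sigma σ hσO hϖF (((hsh j.rev i.rev).2.2.1) ⟨by omega, by omega⟩))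
    · rintro ⟨h1, h2, h3⟩
      exact Ppow_mul_mem (O.mul_mem (sgnE_mem _) (sgnE_mem _))
        (Ppow_sigma σ hσO hϖF (((hsh j.rev i.rev).2.1) ⟨by omega, by omega, by omega⟩))
    · rintro ⟨h1, h2⟩
      have hs1 : sgnE E n i = -1 := by unfold sgnE; rw [if_neg (by omega)]
      have hs2 : sgnE E n j = -1 := by unfold sgnE; rw [if_neg (by omega)]
      show sgnE E n i * sgnE E n j * σ (g j.rev i.rev) - 1 ∈ _
      rw [hs1, hs2, show (-1 : E) * -1 * σ (g j.rev i.rev) = σ (g j.rev i.rev) by ring,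
        ← map_one σ, ← map_sub]
      exact Ppow_sigma σ hσO hϖF (((hsh j.rev i.rev).1) ⟨by omega, by omega⟩)

lemma shape_col0 (O : Subring E) (ϖ : E) (hϖO : ϖ ∈ O) (hϖ0 : ϖ ≠ 0)
    (n m : ℕ) (hn : 1 ≤ n) (g : Matrix (Fin (2 * n)) (Fin (2 * n)) E)
    (hg : g ∈ KWshape O ϖ n m) :
    ∀ j : Fin (2 * n), g j ⟨0, by omega⟩ - (if j = ⟨0, by omega⟩ then 1 else 0)
      ∈ Ppow O ϖ (m : ℤ) := by
  obtain ⟨hO, hsh⟩ := hg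
  intro j
  have hj := j.isLt
  by_cases h0 : (j : ℕ) = 0
  · rw [if_pos (by rw [Fin.ext_iff]; exact h0)]
    exact (hsh j ⟨0, by omega⟩).1 ⟨h0, rfl⟩
  · rw [if_neg (fun hc => h0 (by rw [hc])), sub_zero]
    by_cases h1 : (j : ℕ) = 2 * n - 1
    · exact Ppow_mono hϖO hϖ0 (by omega) ((hsh j ⟨0, by omega⟩).2.2.1 ⟨h1, rfl⟩)
    · exact (hsh j ⟨0, by omega⟩).2.1 ⟨by omega, by omega, rfl⟩

lemma shape_row2n (O : Subring E) (ϖ : E) (hϖO : ϖ ∈ O) (hϖ0 : ϖ ≠ 0)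
    (n m : ℕ) (hn : 1 ≤ n) (g : Matrix (Fin (2 * n)) (Fin (2 * n)) E)
    (hg : g ∈ KWshape O ϖ n m) :
    ∀ l : Fin (2 * n), g ⟨2 * n - 1, by omega⟩ l - (if l = ⟨2 * n - 1, by omega⟩ then 1 else 0)
      ∈ Ppow O ϖ (m : ℤ) := by
  obtain ⟨hO, hsh⟩ := hg
  intro l
  have hl := l.isLt
  have hval : ((⟨2 * n - 1, by omega⟩ : Fin (2 * n)) : ℕ) = 2 * n - 1 := rfl
  by_cases h0 : (l : ℕ) = 2 * n - 1
  · rw [if_pos (by rw [Fin.ext_iff]; exact h0)]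
    exact (hsh ⟨2 * n - 1, by omega⟩ l).2.2.2.2 ⟨hval, h0⟩
  · rw [if_neg (fun hc => h0 (by rw [hc])), sub_zero]
    by_cases h1 : (l : ℕ) = 0
    · exact Ppow_mono hϖO hϖ0 (by omega) ((hsh ⟨2 * n - 1, by omega⟩ l).2.2.1 ⟨hval, h1⟩)
    · exact (hsh ⟨2 * n - 1, by omega⟩ l).2.2.2.1 ⟨hval, by omega, by omega⟩

lemma shape_corner (O : Subring E) (ϖ : E) (n m : ℕ) (hn : 1 ≤ n)
    (g : Matrix (Fin (2 * n)) (Fin (2 * n)) E) (hg : g ∈ KWshape O ϖ n m) :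
    g ⟨2 * n - 1, by omega⟩ ⟨0, by omega⟩ ∈ Ppow O ϖ (2 * (m : ℤ)) := by
  obtain ⟨hO, hsh⟩ := hg
  exact (hsh ⟨2 * n - 1, by omega⟩ ⟨0, by omega⟩).2.2.1 ⟨rfl, rfl⟩

end Shape

end Newforms

namespace Newforms

set_option maxHeartbeats 1000000 in
/-- For `n ≥ 1`, even `2m > 0`, `t ∈ E^×` with `t ∈ 𝔭_E^{-m}`, and `k'`
acting on `𝕎` through the `W`-factor: (i) if `k' ∈ K_{2m}^W` then `φ_{t,f_n}` is invariant
under `k'`; (ii) if `k' ∈ ᵗK_{2m}^W` then `φ_{t,f_{-n}}` is invariant under `k'`. -/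
theorem statement13 (E : Type) [Field E] [CharZero E]
    (σ : E ≃+* E) (hσinv : ∀ x, σ (σ x) = x) (hσne : σ ≠ RingEquiv.refl E)
    (O : Subring E) (hval : ∀ x : E, x ∈ O ∨ x⁻¹ ∈ O) (hσO : ∀ x ∈ O, σ x ∈ O)
    (ϖ : E) (hϖO : ϖ ∈ O) (hϖ0 : ϖ ≠ 0) (hϖnu : ϖ⁻¹ ∉ O)
    (hϖgen : ∀ x ∈ O, x⁻¹ ∉ O → x ∈ Ppow O ϖ 1) (hϖF : σ ϖ = ϖ)
    (hodd : (2 : E)⁻¹ ∈ O)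
    (ψ : E → ℂ) (hψadd : ∀ x y : E, σ x = x → σ y = y → ψ (x + y) = ψ x * ψ y)
    (hψO : ∀ x : E, σ x = x → x ∈ O → ψ x = 1)
    (hψnt : ∃ x : E, σ x = x ∧ ϖ * x ∈ O ∧ ψ x ≠ 1)
    (n m : ℕ) (hn : 1 ≤ n) (hm : 1 ≤ m)
    (t : E) (ht0 : t ≠ 0) (ht : t ∈ Ppow O ϖ (-(m : ℤ))) :
    -- (i) k' ∈ K_{2m}^W fixes φ_{t,f_n}
    (∀ k' ∈ KW σ O ϖ n m, ∀ u : Matrix (Fin (2 * n + 1)) (Fin (2 * n)) E,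
      phiTW σ O ψ n t (fun j => if (j : ℕ) = 0 then 1 else 0) (u * (k'⁻¹)ᵀ) =
        phiTW σ O ψ n t (fun j => if (j : ℕ) = 0 then 1 else 0) u) ∧
    -- (ii) k' ∈ ᵗK_{2m}^W fixes φ_{t,f_{-n}}
    (∀ k' : Matrix (Fin (2 * n)) (Fin (2 * n)) E, (∃ g ∈ KW σ O ϖ n m, k' = gᵀ) →
      ∀ u : Matrix (Fin (2 * n + 1)) (Fin (2 * n)) E,
        phiTW σ O ψ n t (fun j => if (j : ℕ) = 2 * n - 1 then 1 else 0) (u * (k'⁻¹)ᵀ) =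
          phiTW σ O ψ n t (fun j => if (j : ℕ) = 2 * n - 1 then 1 else 0) u) := by
  constructor
  · -- Part (i)
    intro k' hk' u
    obtain ⟨hshape, hU⟩ := hk'
    have hgmul : ginvM σ n k' * k' = 1 := ginvM_mul σ n k' hU
    have hinv : k'⁻¹ = ginvM σ n k' := Matrix.inv_eq_left_inv hgmul
    have hkh : k' * ginvM σ n k' = 1 := mul_eq_one_comm.mpr hgmul
    have hshape' : ginvM σ n k' ∈ KWshape O ϖ n m :=
      ginvM_mem_shape σ O hσO ϖ hϖF n m hn k' hshape
    have hv0 : ((⟨0, by omega⟩ : Fin (2 * n)) : ℕ) = 0 := rfl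
    have hv1 : ((⟨2 * n - 1, by omega⟩ : Fin (2 * n)) : ℕ) = 2 * n - 1 := rfl
    have hrev : ((⟨0, by omega⟩ : Fin (2 * n)).rev) = ⟨2 * n - 1, by omega⟩ := by
      rw [Fin.ext_iff, Fin.val_rev, hv0, hv1]
    rw [hinv]
    refine key_inv σ hσinv O hσO ϖ hϖ0 hϖF hodd ψ hψadd hψO n m hn t ht
      ⟨0, by omega⟩ (ginvM σ n k') k'
      (fun i j => hshape'.1 i j) (fun i j => hshape.1 i j)
      (shape_col0 O ϖ hϖO hϖ0 n m hn _ hshape')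
      (shape_col0 O ϖ hϖO hϖ0 n m hn _ hshape)
      (by rw [hrev]; exact shape_row2n O ϖ hϖO hϖ0 n m hn _ hshape')
      (by rw [hrev]; exact shape_corner O ϖ n m hn _ hshape')
      hkh _ ?_ u
    funext j
    exact if_congr (Iff.symm Fin.ext_iff) rfl rfl
  · -- Part (ii)
    rintro k' ⟨g, hg, rfl⟩ u
    obtain ⟨hshape, hU⟩ := hg
    have hG : ginvM σ n g * g = 1 := ginvM_mul σ n g hU
    have hG2 : g * ginvM σ n g = 1 := mul_eq_one_comm.mpr hG
    have hgmul : (ginvM σ n g)ᵀ * gᵀ = 1 := by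
      rw [← Matrix.transpose_mul, hG2, Matrix.transpose_one]
    have hinv : (gᵀ)⁻¹ = (ginvM σ n g)ᵀ := Matrix.inv_eq_left_inv hgmul
    have hkh : gᵀ * (ginvM σ n g)ᵀ = 1 := by
      rw [← Matrix.transpose_mul, hG, Matrix.transpose_one]
    have hshape' : ginvM σ n g ∈ KWshape O ϖ n m :=
      ginvM_mem_shape σ O hσO ϖ hϖF n m hn g hshape
    have hv0 : ((⟨0, by omega⟩ : Fin (2 * n)) : ℕ) = 0 := rfl
    have hv1 : ((⟨2 * n - 1, by omega⟩ : Fin (2 * n)) : ℕ) = 2 * n - 1 := rfl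
    have hrev : ((⟨2 * n - 1, by omega⟩ : Fin (2 * n)).rev) = ⟨0, by omega⟩ := by
      rw [Fin.ext_iff, Fin.val_rev, hv0, hv1]; omega
    rw [hinv]
    refine key_inv σ hσinv O hσO ϖ hϖ0 hϖF hodd ψ hψadd hψO n m hn t ht
      ⟨2 * n - 1, by omega⟩ (ginvM σ n g)ᵀ gᵀ
      (fun i j => hshape'.1 j i) (fun i j => hshape.1 j i)
      (fun j => shape_row2n O ϖ hϖO hϖ0 n m hn _ hshape' j)
      (fun j => shape_row2n O ϖ hϖO hϖ0 n m hn _ hshape j)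
      (by rw [hrev]; exact fun l => shape_col0 O ϖ hϖO hϖ0 n m hn _ hshape' l)
      (by rw [hrev]; exact shape_corner O ϖ n m hn _ hshape')
      hkh _ ?_ u
    funext j
    exact if_congr (Iff.symm Fin.ext_iff) rfl rfl


end Newforms
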